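/- Let G be a quad-connected cubic graph with a quadrangle C with vertices u1,u2,u3,u4 in order. Let v1 be the neighbor of u1 not on C and v2 the neighbor of u2 not on C. Let w1 ≠ u1 be a neighbor of v1, and z1 ≠ v1 a neighbor of w1. Then G+(u2,u3,v1,w1) is a long 1-extension of G, and if z1 ≠ v2 then G+(u1,u2,w1,z1) is a long 1-extension of G. -/

import Mathlib

open SimpleGraph

/-- A graph has a circuit if it contains a cycle. -/
def HasCircuit {V : Type} (G : SimpleGraph V) : Prop :=
  ∃ (v : V) (w : G.Walk v v), w.IsCycle

/-- `s` is the vertex set of a quadrangle (circuit of length four) of `G`. -/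
def IsQuadSet {V : Type} (G : SimpleGraph V) (s : Set V) : Prop :=
  ∃ a b c d : V, s = {a, b, c, d} ∧ a ≠ b ∧ a ≠ c ∧ a ≠ d ∧ b ≠ c ∧ b ≠ d ∧ c ≠ d ∧
    G.Adj a b ∧ G.Adj b c ∧ G.Adj c d ∧ G.Adj d a

def HasQuadrangle {V : Type} (G : SimpleGraph V) : Prop := ∃ s, IsQuadSet G s

def AtMostOneQuadrangle {V : Type} (G : SimpleGraph V) : Prop :=
  ∀ s t, IsQuadSet G s → IsQuadSet G t → s = t

/-- The edge cut `δA`: edges with one end in `A` and the other outside. -/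
def cutEdges {V : Type} (G : SimpleGraph V) (A : Set V) : Set (Sym2 V) :=
  {e | ∃ a b, a ∈ A ∧ b ∉ A ∧ G.Adj a b ∧ e = s(a, b)}

/-- `G` is `k`-connected: more than `k` vertices and removing fewer than `k`
vertices leaves a connected graph. -/
def IsKConnected {V : Type} [Fintype V] (G : SimpleGraph V) (k : ℕ) : Prop :=
  k < Fintype.card V ∧ ∀ S : Set V, S.ncard < k → (G.induce Sᶜ).Connected

/-- Every vertex has degree three. -/
def IsCubic {V : Type} (G : SimpleGraph V) : Prop :=
  ∀ v : V, (G.neighborSet v).ncard = 3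

/-- Cyclically `k`-connected cubic graph: 3-connected, at least `2k` vertices, and
every edge-cut of cardinality less than `k` has a circuit-free side. -/
def CyclicallyKConnected {V : Type} [Fintype V] (G : SimpleGraph V) (k : ℕ) : Prop :=
  IsKConnected G 3 ∧ 2 * k ≤ Fintype.card V ∧
    ∀ A : Set V, A.Nonempty → Aᶜ.Nonempty → (cutEdges G A).ncard < k →
      ¬ HasCircuit (G.induce A) ∨ ¬ HasCircuit (G.induce Aᶜ)

/-- The induced subgraph on `A` is (exactly) a quadrangle. -/
def IsQuadrangleGraphOn {V : Type} (G : SimpleGraph V) (A : Set V) : Prop :=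
  ∃ a b c d : V, A = {a, b, c, d} ∧ a ≠ b ∧ a ≠ c ∧ a ≠ d ∧ b ≠ c ∧ b ≠ d ∧ c ≠ d ∧
    G.Adj a b ∧ G.Adj b c ∧ G.Adj c d ∧ G.Adj d a ∧ ¬ G.Adj a c ∧ ¬ G.Adj b d

/-- Quad-connected cubic graph. -/
def QuadConnected {V : Type} [Fintype V] (G : SimpleGraph V) : Prop :=
  CyclicallyKConnected G 4 ∧ 10 ≤ Fintype.card V ∧
    ((∃ s t, IsQuadSet G s ∧ IsQuadSet G t ∧ s ≠ t) → 12 ≤ Fintype.card V) ∧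
    ∀ A : Set V, A.Nonempty → Aᶜ.Nonempty → (cutEdges G A).ncard ≤ 4 →
      (¬ HasCircuit (G.induce A) ∨ IsQuadrangleGraphOn G A) ∨
      (¬ HasCircuit (G.induce Aᶜ) ∨ IsQuadrangleGraphOn G Aᶜ)

/-- `G+(u,v,x,y)`: subdivide the edges `uv` and `xy` (new vertices `Sum.inr 0`
resp. `Sum.inr 1`) and join the two new vertices by an edge. -/
def onePlus {V : Type} (G : SimpleGraph V) (u v x y : V) : SimpleGraph (V ⊕ Fin 2) :=
  SimpleGraph.fromRel (fun a b =>
    match a, b with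
    | Sum.inl a, Sum.inl b => G.Adj a b ∧ s(a, b) ≠ s(u, v) ∧ s(a, b) ≠ s(x, y)
    | Sum.inl a, Sum.inr i => (i = 0 ∧ (a = u ∨ a = v)) ∨ (i = 1 ∧ (a = x ∨ a = y))
    | Sum.inr _, Sum.inl _ => False
    | Sum.inr i, Sum.inr j => i ≠ j)

/-- The data of a 1-extension `G+(u,v,x,y)`: `uv`, `xy` are edges and
`u,v,x,y` are pairwise distinct. -/
def OneExtData {V : Type} (G : SimpleGraph V) (u v x y : V) : Prop :=
  G.Adj u v ∧ G.Adj x y ∧ u ≠ x ∧ u ≠ y ∧ v ≠ x ∧ v ≠ y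

/-- A long 1-extension: moreover neither `u` nor `v` is adjacent to `x` or `y`. -/
def LongOneExtData {V : Type} (G : SimpleGraph V) (u v x y : V) : Prop :=
  OneExtData G u v x y ∧ ¬ G.Adj u x ∧ ¬ G.Adj u y ∧ ¬ G.Adj v x ∧ ¬ G.Adj v y

/-- A short 1-extension: a 1-extension that is not long. -/
def ShortOneExtData {V : Type} (G : SimpleGraph V) (u v x y : V) : Prop :=
  OneExtData G u v x y ∧ (G.Adj u x ∨ G.Adj u y ∨ G.Adj v x ∨ G.Adj v y)

/-- A homeomorphic embedding of `G` into `H`. -/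
structure HomeoEmb {V W : Type} (G : SimpleGraph V) (H : SimpleGraph W) where
  vmap : V → W
  vinj : Function.Injective vmap
  emap : ∀ ⦃a b : V⦄, G.Adj a b → H.Walk (vmap a) (vmap b)
  emap_path : ∀ ⦃a b : V⦄ (h : G.Adj a b), (emap h).IsPath
  emap_symm : ∀ ⦃a b : V⦄ (h : G.Adj a b), (emap h.symm).reverse = emap h
  internal : ∀ ⦃a b : V⦄ (h : G.Adj a b) (w : W), w ∈ (emap h).support →
      w ∈ Set.range vmap → w = vmap a ∨ w = vmap b
  edge_disjoint : ∀ ⦃a b c d : V⦄ (h₁ : G.Adj a b) (h₂ : G.Adj c d),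
      s(a, b) ≠ s(c, d) → ∀ e, e ∈ (emap h₁).edges → e ∉ (emap h₂).edges
  meet_ends : ∀ ⦃a b c d : V⦄ (h₁ : G.Adj a b) (h₂ : G.Adj c d),
      s(a, b) ≠ s(c, d) → ∀ w, w ∈ (emap h₁).support → w ∈ (emap h₂).support →
      (w = vmap a ∨ w = vmap b) ∧ (w = vmap c ∨ w = vmap d)

/-- Subdividing the edge `uv` of `G`: the new vertex is `Sum.inr ()`. -/
def subdivideEdge {V : Type} (G : SimpleGraph V) (u v : V) : SimpleGraph (V ⊕ Unit) :=
  SimpleGraph.fromRel (fun a b =>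
    match a, b with
    | Sum.inl a, Sum.inl b => G.Adj a b ∧ s(a, b) ≠ s(u, v)
    | Sum.inl a, Sum.inr _ => a = u ∨ a = v
    | _, _ => False)

/-- `S` is obtained from `G` by repeatedly subdividing edges. -/
inductive IsSubdivision {V : Type} (G : SimpleGraph V) : {W : Type} → SimpleGraph W → Prop
  | refl : IsSubdivision G G
  | step {W : Type} {S : SimpleGraph W} {u v : W} (h : S.Adj u v)
      (hS : IsSubdivision G S) : IsSubdivision G (subdivideEdge S u v)

/-- `H` topologically contains `G`: some graph obtained from `G` by repeatedly
subdividing edges is isomorphic to a subgraph of `H`. -/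
def TopContains {W V : Type} (H : SimpleGraph W) (G : SimpleGraph V) : Prop :=
  ∃ (U : Type) (S : SimpleGraph U), IsSubdivision G S ∧
    ∃ f : U → W, Function.Injective f ∧ ∀ a b : U, S.Adj a b → H.Adj (f a) (f b)

/-- The biladder on `2p` vertices; `(false, i)` is `uᵢ` and `(true, i)` is `vᵢ`. -/
def biladder (p : ℕ) : SimpleGraph (Bool × ZMod p) :=
  SimpleGraph.fromRel (fun a b =>
    (a.1 = false ∧ b.1 = false ∧ b.2 = a.2 + 1) ∨
    (a.1 = true ∧ b.1 = true ∧ b.2 = a.2 + 2) ∨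
    (a.1 = false ∧ b.1 = true ∧ a.2 = b.2))

lemma isPath_loop_eq_nil {W : Type} {H : SimpleGraph W} {u : W} (p : H.Walk u u)
    (hp : p.IsPath) : p = SimpleGraph.Walk.nil := by
  cases p with
  | nil => rfl
  | cons h q =>
    exfalso
    have h2 := hp.support_nodup
    rw [Walk.support_cons, List.nodup_cons] at h2
    exact h2.1 (q.end_mem_support)

lemma acyclic_edge_bound {W : Type} [Fintype W] [DecidableEq W] (H : SimpleGraph W)
    [DecidableRel H.Adj] (hac : H.IsAcyclic) (hne : Nonempty W) :
    H.edgeFinset.card + 1 ≤ Fintype.card W := by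
  classical
  set root : W → W := fun v => (H.connectedComponentMk v).out with hroot
  have hreach : ∀ v, H.Reachable (root v) v := by
    intro v
    exact SimpleGraph.ConnectedComponent.exact (H.connectedComponentMk v).out_eq
  have hrooteq : ∀ {u v : W}, H.Reachable u v → root u = root v := by
    intro u v h
    simp only [hroot]
    rw [SimpleGraph.ConnectedComponent.sound h]
  set P : Sym2 W → W → Prop :=
    fun e w => ∃ p : H.Walk (root w) w, p.IsPath ∧ p.edges.getLast? = some e with hP
  have claim2 : ∀ e e' w, P e w → P e' w → e = e' := by
    rintro e e' w ⟨p, hp, hlast⟩ ⟨p', hp', hlast'⟩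
    have := hac.path_unique ⟨p, hp⟩ ⟨p', hp'⟩
    rw [Subtype.mk.injEq] at this
    rw [this] at hlast
    exact Option.some.inj (hlast.symm.trans hlast')
  have claim1 : ∀ e ∈ H.edgeSet, ∃ w, P e w := by
    intro e
    induction e with
    | _ u v =>
      intro he
      rw [SimpleGraph.mem_edgeSet] at he
      obtain ⟨q, hq⟩ := ((hreach u).some.toPath : H.Path _ _)
      by_cases hv : v ∈ q.support
      · refine ⟨u, q, hq, ?_⟩
        have hdrop := hq.dropUntil hv
        have hsingle : (SimpleGraph.Walk.cons he.symm SimpleGraph.Walk.nil : H.Walk v u).IsPath := by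
          simp [he.ne']
        have heq : q.dropUntil v hv = SimpleGraph.Walk.cons he.symm SimpleGraph.Walk.nil := by
          have h3 := hac.path_unique ⟨_, hdrop⟩ ⟨_, hsingle⟩
          exact congrArg Subtype.val h3
        conv_lhs => rw [← q.take_spec hv]
        rw [Walk.edges_append, heq]
        simp [List.getLast?_append, Sym2.eq_swap]
      · have hru : root u = root v := hrooteq he.reachable
        refine ⟨v, (q.concat he).copy hru rfl, ?_, ?_⟩
        · rw [Walk.isPath_copy]
          rw [Walk.isPath_def, Walk.support_concat]
          rw [List.nodup_append]
          refine ⟨hq.support_nodup, List.nodup_singleton v, ?_⟩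
          intro a ha b hav hab
          rw [List.mem_singleton] at hav
          subst hav hab
          exact hv ha
        · rw [Walk.edges_copy, Walk.edges_concat, List.concat_eq_append,
            List.getLast?_append]
          simp
  -- the injection
  set F : Sym2 W → W := fun e => if h : ∃ w, P e w then h.choose else hne.some with hF
  have hPF : ∀ e ∈ H.edgeFinset, P e (F e) := by
    intro e hee
    rw [SimpleGraph.mem_edgeFinset] at hee
    have h := claim1 e hee
    simp only [hF, dif_pos h]
    exact h.choose_spec
  have hnotroot : ∀ e ∈ H.edgeFinset, ∀ w0, F e ≠ root w0 := by
    intro e hee w0 heq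
    obtain ⟨p, hp, hlast⟩ := hPF e hee
    have h1 : root (F e) = F e := by
      rw [heq, hrooteq (hreach w0)]
    have h2 : (p.copy h1 rfl).IsPath := by rwa [Walk.isPath_copy]
    have h3 := isPath_loop_eq_nil _ h2
    have h4 : p.edges = [] := by
      have := congrArg SimpleGraph.Walk.edges h3
      rwa [Walk.edges_copy] at this
    rw [h4] at hlast
    simp at hlast
  have hinj : Set.InjOn F H.edgeFinset := by
    intro e1 h1 e2 h2 heq
    exact claim2 e1 e2 (F e1) (hPF e1 h1) (heq ▸ hPF e2 h2)
  have hsub : H.edgeFinset.image F ⊆ Finset.univ.erase (root hne.some) := by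
    intro w hw
    rw [Finset.mem_image] at hw
    obtain ⟨e, he, rfl⟩ := hw
    exact Finset.mem_erase.mpr ⟨hnotroot e he hne.some, Finset.mem_univ _⟩
  have := Finset.card_le_card hsub
  rw [Finset.card_image_of_injOn hinj, Finset.card_erase_of_mem (Finset.mem_univ _),
    Finset.card_univ] at this
  have hpos : 1 ≤ Fintype.card W := Fintype.card_pos_iff.mpr hne
  omega




lemma cutEdges_compl {V : Type} (G : SimpleGraph V) (A : Set V) :
    cutEdges G Aᶜ = cutEdges G A := by
  ext e
  constructor
  · rintro ⟨a, b, ha, hb, hadj, rfl⟩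
    exact ⟨b, a, by simpa using hb, by simpa using ha, hadj.symm, Sym2.eq_swap⟩
  · rintro ⟨a, b, ha, hb, hadj, rfl⟩
    exact ⟨b, a, by simpa using hb, by simpa using ha, hadj.symm, Sym2.eq_swap⟩

lemma cut_ncard_eq {V : Type} [Fintype V] [DecidableEq V] (G : SimpleGraph V)
    [DecidableRel G.Adj] (A : Set V) [DecidablePred (· ∈ A)] :
    (cutEdges G A).ncard
      = ∑ a ∈ A.toFinset, ((G.neighborFinset a).filter (· ∉ A)).card := by
  classical
  have hfin : (cutEdges G A).Finite := Set.toFinite _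
  rw [Set.ncard_eq_toFinset_card _ hfin]
  have hset : hfin.toFinset
      = A.toFinset.biUnion
        (fun a => ((G.neighborFinset a).filter (· ∉ A)).image (fun b => s(a, b))) := by
    ext e
    simp only [Set.Finite.mem_toFinset, Finset.mem_biUnion, Finset.mem_image,
      Finset.mem_filter, SimpleGraph.mem_neighborFinset, Set.mem_toFinset]
    constructor
    · rintro ⟨a, b, ha, hb, hadj, rfl⟩
      exact ⟨a, ha, b, ⟨hadj, hb⟩, rfl⟩
    · rintro ⟨a, ha, b, ⟨hadj, hb⟩, rfl⟩
      exact ⟨a, b, ha, hb, hadj, rfl⟩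
  rw [hset, Finset.card_biUnion]
  · refine Finset.sum_congr rfl (fun a ha => ?_)
    rw [Set.mem_toFinset] at ha
    apply Finset.card_image_of_injOn
    intro b hb b' hb' heq
    simp only [Finset.coe_filter, SimpleGraph.mem_neighborFinset, Set.mem_setOf_eq] at hb hb'
    rcases Sym2.eq_iff.mp heq with ⟨-, h⟩ | ⟨h1, h2⟩
    · exact h
    · exact absurd (h1 ▸ ha) hb'.2
  · intro a ha a' ha' hne
    rw [Finset.mem_coe, Set.mem_toFinset] at ha ha'
    rw [Function.onFun, Finset.disjoint_left]
    intro e he he'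
    simp only [Finset.mem_image, Finset.mem_filter, SimpleGraph.mem_neighborFinset] at he he'
    obtain ⟨b, ⟨hadj, hb⟩, rfl⟩ := he
    obtain ⟨b', ⟨hadj', hb'⟩, heq⟩ := he'
    rcases Sym2.eq_iff.mp heq with ⟨h1, -⟩ | ⟨h1, h2⟩
    · exact hne (h1.symm)
    · exact hb' (h2 ▸ ha)


lemma cut_ncard_eq' {V : Type} [Fintype V] [DecidableEq V] (G : SimpleGraph V)
    [DecidableRel G.Adj] (A : Set V) [DecidablePred (· ∈ A)] (s : Finset V)
    (hs : ∀ x, x ∈ s ↔ x ∈ A) :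
    (cutEdges G A).ncard = ∑ a ∈ s, ((G.neighborFinset a).filter (· ∉ A)).card := by
  rw [cut_ncard_eq G A]
  apply Finset.sum_congr _ (fun _ _ => rfl)
  ext x
  rw [Set.mem_toFinset, hs]

lemma forest_side {V : Type} [Fintype V] [DecidableEq V] (G : SimpleGraph V)
    [DecidableRel G.Adj] (hcub : IsCubic G) (B : Set V) [DecidablePred (· ∈ B)]
    (hne : B.Nonempty) (hac : ¬ HasCircuit (G.induce B))
    (hcut : (cutEdges G B).ncard ≤ 4) : B.ncard ≤ 2 := by
  classical
  set H := G.induce B with hH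
  have hacyc : H.IsAcyclic := by
    intro v w hw
    exact hac ⟨v, w, hw⟩
  have hneB : Nonempty ↥B := hne.to_subtype
  have hedge : H.edgeFinset.card + 1 ≤ Fintype.card ↥B :=
    acyclic_edge_bound H hacyc hneB
  have hdeg : ∀ b : ↥B, H.degree b + ((G.neighborFinset ↑b).filter (· ∉ B)).card = 3 := by
    intro b
    have h1 : (G.neighborFinset (↑b : V)).card = 3 := by
      have h := hcub (↑b : V)
      rwa [← Nat.card_coe_set_eq, Nat.card_eq_fintype_card,
        SimpleGraph.card_neighborSet_eq_degree] at h
    have h2 : H.degree b = ((G.neighborFinset (↑b : V)).filter (· ∈ B)).card := by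
      show (H.neighborFinset b).card = _
      apply Finset.card_bij (fun c (_ : c ∈ H.neighborFinset b) => (c : V))
      · intro c hc
        rw [SimpleGraph.mem_neighborFinset] at hc
        rw [Finset.mem_filter, SimpleGraph.mem_neighborFinset]
        exact ⟨hc, c.2⟩
      · intro c _ c' _ h
        exact Subtype.ext h
      · intro x hx
        rw [Finset.mem_filter, SimpleGraph.mem_neighborFinset] at hx
        exact ⟨⟨x, hx.2⟩, by rw [SimpleGraph.mem_neighborFinset]; exact hx.1, rfl⟩
    rw [h2, Finset.card_filter_add_card_filter_not, h1]
  have hsum1 : ∑ b : ↥B, H.degree b = 2 * H.edgeFinset.card :=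
    SimpleGraph.sum_degrees_eq_twice_card_edges H
  have hsum2 : ∑ b : ↥B, ((G.neighborFinset (↑b : V)).filter (· ∉ B)).card
      = ∑ a ∈ B.toFinset, ((G.neighborFinset a).filter (· ∉ B)).card :=
    (Finset.sum_subtype (p := (· ∈ B)) B.toFinset (fun x => Set.mem_toFinset)
      (fun a => ((G.neighborFinset a).filter (· ∉ B)).card)).symm
  have htot : ∑ b : ↥B, (H.degree b + ((G.neighborFinset (↑b : V)).filter (· ∉ B)).card)
      = 3 * Fintype.card ↥B := by
    rw [Finset.sum_congr rfl (fun b _ => hdeg b), Finset.sum_const, Finset.card_univ,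
      smul_eq_mul, mul_comm]
  rw [Finset.sum_add_distrib, hsum1, hsum2, ← cut_ncard_eq G B] at htot
  have hcard : Fintype.card ↥B = B.ncard := by
    rw [Set.ncard_eq_toFinset_card', Set.toFinset_card]
  omega

lemma neighborFinset_card_three {V : Type} [Fintype V] [DecidableEq V] (G : SimpleGraph V)
    [DecidableRel G.Adj] (hcub : IsCubic G) (a : V) : (G.neighborFinset a).card = 3 := by
  have h := hcub a
  rwa [← Nat.card_coe_set_eq, Nat.card_eq_fintype_card,
    SimpleGraph.card_neighborSet_eq_degree] at h

lemma cubic_mem {V : Type} [Fintype V] (G : SimpleGraph V) (hcub : IsCubic G) {u a b c x : V}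
    (ha : G.Adj u a) (hb : G.Adj u b) (hc : G.Adj u c)
    (hab : a ≠ b) (hac : a ≠ c) (hbc : b ≠ c) (hx : G.Adj u x) :
    x = a ∨ x = b ∨ x = c := by
  classical
  have hsub : ({a, b, c} : Set V) ⊆ G.neighborSet u := by
    intro y hy
    rcases hy with rfl | rfl | rfl <;> assumption
  have hle : (G.neighborSet u).ncard ≤ ({a, b, c} : Set V).ncard := by
    rw [hcub u, Set.ncard_eq_three.mpr ⟨a, b, c, hab, hac, hbc, rfl⟩]
  have heq := Set.eq_of_subset_of_ncard_le hsub hle (Set.toFinite _)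
  have : x ∈ ({a, b, c} : Set V) := heq ▸ (hx : x ∈ G.neighborSet u)
  simpa using this

lemma out_le_one {V : Type} [Fintype V] [DecidableEq V] (G : SimpleGraph V)
    [DecidableRel G.Adj] (hcub : IsCubic G) (A : Set V) [DecidablePred (· ∈ A)]
    {a x y : V} (hx : G.Adj a x) (hy : G.Adj a y) (hxy : x ≠ y)
    (hxA : x ∈ A) (hyA : y ∈ A) :
    ((G.neighborFinset a).filter (· ∉ A)).card ≤ 1 := by
  have hsub : (G.neighborFinset a).filter (· ∉ A) ⊆ (G.neighborFinset a) \ {x, y} := by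
    intro b hb
    rw [Finset.mem_filter] at hb
    rw [Finset.mem_sdiff]
    refine ⟨hb.1, ?_⟩
    intro hmem
    rcases Finset.mem_insert.mp hmem with rfl | hmem'
    · exact hb.2 hxA
    · rw [Finset.mem_singleton] at hmem'
      exact hb.2 (hmem' ▸ hyA)
  have hsd : ((G.neighborFinset a) \ {x, y}).card ≤ 1 := by
    have hsub2 : ({x, y} : Finset V) ⊆ G.neighborFinset a := by
      intro b hb
      rcases Finset.mem_insert.mp hb with rfl | hb'
      · exact (SimpleGraph.mem_neighborFinset _ _ _).mpr hx
      · rw [Finset.mem_singleton] at hb'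
        exact (SimpleGraph.mem_neighborFinset _ _ _).mpr (hb' ▸ hy)
    rw [Finset.card_sdiff_of_subset hsub2, neighborFinset_card_three G hcub,
      Finset.card_insert_of_notMem (by simp [hxy]), Finset.card_singleton]
  exact le_trans (Finset.card_le_card hsub) hsd

lemma out_eq_zero {V : Type} [Fintype V] [DecidableEq V] (G : SimpleGraph V)
    [DecidableRel G.Adj] (hcub : IsCubic G) (A : Set V) [DecidablePred (· ∈ A)]
    {a x y z : V} (hx : G.Adj a x) (hy : G.Adj a y) (hz : G.Adj a z)
    (hxy : x ≠ y) (hxz : x ≠ z) (hyz : y ≠ z)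
    (hxA : x ∈ A) (hyA : y ∈ A) (hzA : z ∈ A) :
    ((G.neighborFinset a).filter (· ∉ A)).card = 0 := by
  rw [Finset.card_eq_zero, Finset.eq_empty_iff_forall_notMem]
  intro b hb
  rw [Finset.mem_filter, SimpleGraph.mem_neighborFinset] at hb
  rcases cubic_mem G hcub hx hy hz hxy hxz hyz hb.1 with rfl | rfl | rfl
  · exact hb.2 hxA
  · exact hb.2 hyA
  · exact hb.2 hzA

lemma quad_hasCircuit {V : Type} (G : SimpleGraph V) (A : Set V) {a b c d : V}
    (haA : a ∈ A) (hbA : b ∈ A) (hcA : c ∈ A) (hdA : d ∈ A)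
    (hab' : a ≠ b) (hac' : a ≠ c) (had' : a ≠ d) (hbc' : b ≠ c) (hbd' : b ≠ d) (hcd' : c ≠ d)
    (hab : G.Adj a b) (hbc : G.Adj b c) (hcd : G.Adj c d) (hda : G.Adj d a) :
    HasCircuit (G.induce A) := by
  refine ⟨⟨a, haA⟩, SimpleGraph.Walk.cons (show (G.induce A).Adj ⟨a, haA⟩ ⟨b, hbA⟩ from hab)
    (SimpleGraph.Walk.cons (show (G.induce A).Adj ⟨b, hbA⟩ ⟨c, hcA⟩ from hbc)
      (SimpleGraph.Walk.cons (show (G.induce A).Adj ⟨c, hcA⟩ ⟨d, hdA⟩ from hcd)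
        (SimpleGraph.Walk.cons (show (G.induce A).Adj ⟨d, hdA⟩ ⟨a, haA⟩ from hda)
          SimpleGraph.Walk.nil))), ?_⟩
  rw [SimpleGraph.Walk.isCycle_def]
  refine ⟨?_, by simp, ?_⟩
  · rw [SimpleGraph.Walk.isTrail_def]
    simp only [SimpleGraph.Walk.edges_cons, SimpleGraph.Walk.edges_nil, List.nodup_cons,
      List.mem_cons, List.not_mem_nil, or_false, List.mem_singleton, List.nodup_nil, and_true]
    simp [Sym2.eq_iff, Subtype.mk.injEq, hab', hac', had', hbc', hbd', hcd',
      hab'.symm, hac'.symm, had'.symm, hbc'.symm, hbd'.symm, hcd'.symm]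
  · simp only [SimpleGraph.Walk.support_cons, SimpleGraph.Walk.support_nil, List.tail_cons]
    simp [List.nodup_cons, Subtype.mk.injEq, hbc', hbd', hcd',
      hab'.symm, hac'.symm, had'.symm]

lemma quadOn_ncard {V : Type} [Fintype V] (G : SimpleGraph V) (A : Set V)
    (h : IsQuadrangleGraphOn G A) : A.ncard = 4 := by
  obtain ⟨a, b, c, d, rfl, hab, hac, had, hbc, hbd, hcd, -⟩ := h
  rw [Set.ncard_insert_of_notMem (by simp [hab, hac, had]),
    Set.ncard_insert_of_notMem (by simp [hbc, hbd]),
    Set.ncard_insert_of_notMem (by simp [hcd]), Set.ncard_singleton]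

lemma cut_contra {V : Type} [Fintype V] [DecidableEq V] (G : SimpleGraph V)
    [DecidableRel G.Adj] (hcub : IsCubic G) (hqc : QuadConnected G)
    (A : Set V) [DecidablePred (· ∈ A)] (s : Set V) (hq : IsQuadSet G s) (hsA : s ⊆ A)
    (h5 : 5 ≤ A.ncard) (h6 : A.ncard ≤ 6)
    (hcut : (cutEdges G A).ncard ≤ 4) (hcirc : HasCircuit (G.induce A)) : False := by
  classical
  obtain ⟨hcyc, h10, htwo, hmain⟩ := hqc
  have hcardV : A.ncard + Aᶜ.ncard = Fintype.card V := by
    have := Set.ncard_add_ncard_compl A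
    rwa [Nat.card_eq_fintype_card] at this
  have hAne : A.Nonempty := Set.nonempty_of_ncard_ne_zero (by omega)
  have hcne : Aᶜ.Nonempty := Set.nonempty_of_ncard_ne_zero (by omega)
  rcases hmain A hAne hcne hcut with (h | h) | (h | h)
  · exact h hcirc
  · have := quadOn_ncard G A h; omega
  · have hb := forest_side G hcub Aᶜ hcne h (by rwa [cutEdges_compl])
    omega
  · have h4 : Aᶜ.ncard = 4 := quadOn_ncard G Aᶜ h
    have hst : 12 ≤ Fintype.card V := by
      apply htwo
      obtain ⟨a, b, c, d, hA, h1, h2, h3, h4', h5', h6', hab, hbc, hcd, hda, -, -⟩ := h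
      refine ⟨s, Aᶜ, hq, ⟨a, b, c, d, hA, h1, h2, h3, h4', h5', h6', hab, hbc, hcd, hda⟩, ?_⟩
      obtain ⟨x, y, z, w, rfl, -⟩ := hq
      intro heq
      have hx : x ∈ Aᶜ := heq ▸ (by simp : x ∈ ({x, y, z, w} : Set V))
      exact hx (hsA (by simp))
    omega


lemma contra5 {V : Type} [Fintype V] [DecidableEq V] (G : SimpleGraph V) [DecidableRel G.Adj]
    (hcub : IsCubic G) (hqc : QuadConnected G) (u₁ u₂ u₃ u₄ v₁ : V)
    (d12 : u₁ ≠ u₂) (d13 : u₁ ≠ u₃) (d14 : u₁ ≠ u₄) (d23 : u₂ ≠ u₃) (d24 : u₂ ≠ u₄)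
    (d34 : u₃ ≠ u₄) (e1 : v₁ ≠ u₁) (e2 : v₁ ≠ u₂) (e3 : v₁ ≠ u₃) (e4 : v₁ ≠ u₄)
    (h12 : G.Adj u₁ u₂) (h23 : G.Adj u₂ u₃) (h34 : G.Adj u₃ u₄) (h41 : G.Adj u₄ u₁)
    (hv₁ : G.Adj u₁ v₁) {t : V} (htc : t = u₂ ∨ t = u₃ ∨ t = u₄) (ht : G.Adj t v₁) :
    False := by
  classical
  set A : Set V := {u₁, u₂, u₃, u₄, v₁} with hA
  have hmem1 : u₁ ∈ A := by simp [hA]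
  have hmem2 : u₂ ∈ A := by simp [hA]
  have hmem3 : u₃ ∈ A := by simp [hA]
  have hmem4 : u₄ ∈ A := by simp [hA]
  have hmem5 : v₁ ∈ A := by simp [hA]
  have h5c : A.ncard = 5 := by
    rw [hA, Set.ncard_insert_of_notMem (by simp [d12, d13, d14, e1.symm]),
      Set.ncard_insert_of_notMem (by simp [d23, d24, e2.symm]),
      Set.ncard_insert_of_notMem (by simp [d34, e3.symm]),
      Set.ncard_insert_of_notMem (by simp [e4.symm]), Set.ncard_singleton]
  have hqs : IsQuadSet G {u₁, u₂, u₃, u₄} :=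
    ⟨u₁, u₂, u₃, u₄, rfl, d12, d13, d14, d23, d24, d34, h12, h23, h34, h41⟩
  have hsA : ({u₁, u₂, u₃, u₄} : Set V) ⊆ A := by
    intro x hx
    rw [hA]
    revert hx
    simp only [Set.mem_insert_iff, Set.mem_singleton_iff]
    tauto
  have hcirc := quad_hasCircuit G A hmem1 hmem2 hmem3 hmem4 d12 d13 d14 d23 d24 d34
    h12 h23 h34 h41
  have hcut : (cutEdges G A).ncard ≤ 4 := by
    rw [cut_ncard_eq' G A ({u₁, u₂, u₃, u₄, v₁} : Finset V) (fun x => by simp [hA]),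
      Finset.sum_insert (by simp [d12, d13, d14, e1.symm]),
      Finset.sum_insert (by simp [d23, d24, e2.symm]),
      Finset.sum_insert (by simp [d34, e3.symm]),
      Finset.sum_insert (by simp [e4.symm]), Finset.sum_singleton]
    have b1 : ((G.neighborFinset u₁).filter (· ∉ A)).card = 0 :=
      out_eq_zero G hcub A h12 h41.symm hv₁ d24 e2.symm e4.symm hmem2 hmem4 hmem5
    rcases htc with h | h | h <;> rw [h] at ht
    · have b2 : ((G.neighborFinset u₂).filter (· ∉ A)).card = 0 :=
        out_eq_zero G hcub A h12.symm h23 ht d13 e1.symm e3.symm hmem1 hmem3 hmem5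
      have b3 : ((G.neighborFinset u₃).filter (· ∉ A)).card ≤ 1 :=
        out_le_one G hcub A h23.symm h34 d24 hmem2 hmem4
      have b4 : ((G.neighborFinset u₄).filter (· ∉ A)).card ≤ 1 :=
        out_le_one G hcub A h34.symm h41 d13.symm hmem3 hmem1
      have b5 : ((G.neighborFinset v₁).filter (· ∉ A)).card ≤ 1 :=
        out_le_one G hcub A hv₁.symm ht.symm d12 hmem1 hmem2
      omega
    · have b2 : ((G.neighborFinset u₂).filter (· ∉ A)).card ≤ 1 :=
        out_le_one G hcub A h12.symm h23 d13 hmem1 hmem3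
      have b3 : ((G.neighborFinset u₃).filter (· ∉ A)).card = 0 :=
        out_eq_zero G hcub A h23.symm h34 ht d24 e2.symm e4.symm hmem2 hmem4 hmem5
      have b4 : ((G.neighborFinset u₄).filter (· ∉ A)).card ≤ 1 :=
        out_le_one G hcub A h34.symm h41 d13.symm hmem3 hmem1
      have b5 : ((G.neighborFinset v₁).filter (· ∉ A)).card ≤ 1 :=
        out_le_one G hcub A hv₁.symm ht.symm d13 hmem1 hmem3
      omega
    · have b2 : ((G.neighborFinset u₂).filter (· ∉ A)).card ≤ 1 :=
        out_le_one G hcub A h12.symm h23 d13 hmem1 hmem3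
      have b3 : ((G.neighborFinset u₃).filter (· ∉ A)).card ≤ 1 :=
        out_le_one G hcub A h23.symm h34 d24 hmem2 hmem4
      have b4 : ((G.neighborFinset u₄).filter (· ∉ A)).card = 0 :=
        out_eq_zero G hcub A h34.symm h41 ht d13.symm e3.symm e1.symm hmem3 hmem1 hmem5
      have b5 : ((G.neighborFinset v₁).filter (· ∉ A)).card ≤ 1 :=
        out_le_one G hcub A hv₁.symm ht.symm d14 hmem1 hmem4
      omega
  exact cut_contra G hcub hqc A _ hqs hsA (by omega) (by omega) hcut hcirc

lemma contra6 {V : Type} [Fintype V] [DecidableEq V] (G : SimpleGraph V) [DecidableRel G.Adj]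
    (hcub : IsCubic G) (hqc : QuadConnected G) (u₁ u₂ u₃ u₄ v₁ w₁ : V)
    (d12 : u₁ ≠ u₂) (d13 : u₁ ≠ u₃) (d14 : u₁ ≠ u₄) (d23 : u₂ ≠ u₃) (d24 : u₂ ≠ u₄)
    (d34 : u₃ ≠ u₄) (e1 : v₁ ≠ u₁) (e2 : v₁ ≠ u₂) (e3 : v₁ ≠ u₃) (e4 : v₁ ≠ u₄)
    (f1 : w₁ ≠ u₁) (f2 : w₁ ≠ u₂) (f3 : w₁ ≠ u₃) (f4 : w₁ ≠ u₄) (f5 : w₁ ≠ v₁)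
    (h12 : G.Adj u₁ u₂) (h23 : G.Adj u₂ u₃) (h34 : G.Adj u₃ u₄) (h41 : G.Adj u₄ u₁)
    (hv₁ : G.Adj u₁ v₁) (hw₁ : G.Adj v₁ w₁)
    {t : V} (htc : t = u₂ ∨ t = u₃ ∨ t = u₄) (ht : G.Adj t w₁) :
    False := by
  classical
  set A : Set V := {u₁, u₂, u₃, u₄, v₁, w₁} with hA
  have hmem1 : u₁ ∈ A := by simp [hA]
  have hmem2 : u₂ ∈ A := by simp [hA]
  have hmem3 : u₃ ∈ A := by simp [hA]
  have hmem4 : u₄ ∈ A := by simp [hA]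
  have hmem5 : v₁ ∈ A := by simp [hA]
  have hmem6 : w₁ ∈ A := by simp [hA]
  have h6c : A.ncard = 6 := by
    rw [hA, Set.ncard_insert_of_notMem (by simp [d12, d13, d14, e1.symm, f1.symm]),
      Set.ncard_insert_of_notMem (by simp [d23, d24, e2.symm, f2.symm]),
      Set.ncard_insert_of_notMem (by simp [d34, e3.symm, f3.symm]),
      Set.ncard_insert_of_notMem (by simp [e4.symm, f4.symm]),
      Set.ncard_insert_of_notMem (by simp [f5.symm]), Set.ncard_singleton]
  have hqs : IsQuadSet G {u₁, u₂, u₃, u₄} :=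
    ⟨u₁, u₂, u₃, u₄, rfl, d12, d13, d14, d23, d24, d34, h12, h23, h34, h41⟩
  have hsA : ({u₁, u₂, u₃, u₄} : Set V) ⊆ A := by
    intro x hx
    rw [hA]
    revert hx
    simp only [Set.mem_insert_iff, Set.mem_singleton_iff]
    tauto
  have hcirc := quad_hasCircuit G A hmem1 hmem2 hmem3 hmem4 d12 d13 d14 d23 d24 d34
    h12 h23 h34 h41
  have hcut : (cutEdges G A).ncard ≤ 4 := by
    rw [cut_ncard_eq' G A ({u₁, u₂, u₃, u₄, v₁, w₁} : Finset V) (fun x => by simp [hA]),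
      Finset.sum_insert (by simp [d12, d13, d14, e1.symm, f1.symm]),
      Finset.sum_insert (by simp [d23, d24, e2.symm, f2.symm]),
      Finset.sum_insert (by simp [d34, e3.symm, f3.symm]),
      Finset.sum_insert (by simp [e4.symm, f4.symm]),
      Finset.sum_insert (by simp [f5.symm]), Finset.sum_singleton]
    have b1 : ((G.neighborFinset u₁).filter (· ∉ A)).card = 0 :=
      out_eq_zero G hcub A h12 h41.symm hv₁ d24 e2.symm e4.symm hmem2 hmem4 hmem5
    have b5 : ((G.neighborFinset v₁).filter (· ∉ A)).card ≤ 1 :=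
      out_le_one G hcub A hv₁.symm hw₁ f1.symm hmem1 hmem6
    rcases htc with h | h | h <;> rw [h] at ht
    · have b2 : ((G.neighborFinset u₂).filter (· ∉ A)).card = 0 :=
        out_eq_zero G hcub A h12.symm h23 ht d13 f1.symm f3.symm hmem1 hmem3 hmem6
      have b3 : ((G.neighborFinset u₃).filter (· ∉ A)).card ≤ 1 :=
        out_le_one G hcub A h23.symm h34 d24 hmem2 hmem4
      have b4 : ((G.neighborFinset u₄).filter (· ∉ A)).card ≤ 1 :=
        out_le_one G hcub A h34.symm h41 d13.symm hmem3 hmem1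
      have b6 : ((G.neighborFinset w₁).filter (· ∉ A)).card ≤ 1 :=
        out_le_one G hcub A hw₁.symm ht.symm e2 hmem5 hmem2
      omega
    · have b2 : ((G.neighborFinset u₂).filter (· ∉ A)).card ≤ 1 :=
        out_le_one G hcub A h12.symm h23 d13 hmem1 hmem3
      have b3 : ((G.neighborFinset u₃).filter (· ∉ A)).card = 0 :=
        out_eq_zero G hcub A h23.symm h34 ht d24 f2.symm f4.symm hmem2 hmem4 hmem6
      have b4 : ((G.neighborFinset u₄).filter (· ∉ A)).card ≤ 1 :=
        out_le_one G hcub A h34.symm h41 d13.symm hmem3 hmem1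
      have b6 : ((G.neighborFinset w₁).filter (· ∉ A)).card ≤ 1 :=
        out_le_one G hcub A hw₁.symm ht.symm e3 hmem5 hmem3
      omega
    · have b2 : ((G.neighborFinset u₂).filter (· ∉ A)).card ≤ 1 :=
        out_le_one G hcub A h12.symm h23 d13 hmem1 hmem3
      have b3 : ((G.neighborFinset u₃).filter (· ∉ A)).card ≤ 1 :=
        out_le_one G hcub A h23.symm h34 d24 hmem2 hmem4
      have b4 : ((G.neighborFinset u₄).filter (· ∉ A)).card = 0 :=
        out_eq_zero G hcub A h34.symm h41 ht d13.symm f3.symm f1.symm hmem3 hmem1 hmem6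
      have b6 : ((G.neighborFinset w₁).filter (· ∉ A)).card ≤ 1 :=
        out_le_one G hcub A hw₁.symm ht.symm e4 hmem5 hmem4
      omega
  exact cut_contra G hcub hqc A _ hqs hsA (by omega) (by omega) hcut hcirc

/-- extensions around a quadrangle are long 1-extensions. -/
theorem quadrangle_extensions_long
    {V : Type} [Fintype V] (G : SimpleGraph V) (hcub : IsCubic G)
    (hqc : QuadConnected G) (u₁ u₂ u₃ u₄ : V)
    (hC : IsQuadrangleGraphOn G {u₁, u₂, u₃, u₄})
    (hdist : ([u₁, u₂, u₃, u₄] : List V).Pairwise (· ≠ ·))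
    (h12 : G.Adj u₁ u₂) (h23 : G.Adj u₂ u₃) (h34 : G.Adj u₃ u₄) (h41 : G.Adj u₄ u₁)
    (v₁ : V) (hv₁ : G.Adj u₁ v₁) (hv₁C : v₁ ∉ ({u₁, u₂, u₃, u₄} : Set V))
    (v₂ : V) (hv₂ : G.Adj u₂ v₂) (hv₂C : v₂ ∉ ({u₁, u₂, u₃, u₄} : Set V))
    (w₁ : V) (hw₁ : G.Adj v₁ w₁) (hw₁u : w₁ ≠ u₁)
    (z₁ : V) (hz₁ : G.Adj w₁ z₁) (hz₁v : z₁ ≠ v₁) :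
    LongOneExtData G u₂ u₃ v₁ w₁ ∧
      (z₁ ≠ v₂ → LongOneExtData G u₁ u₂ w₁ z₁) := by
  classical
  simp only [List.pairwise_cons, List.mem_cons, List.mem_singleton, List.not_mem_nil,
    or_false, forall_eq_or_imp, forall_eq] at hdist
  obtain ⟨⟨d12, d13, d14⟩, ⟨d23, d24⟩, d34, -⟩ := hdist
  simp only [Set.mem_insert_iff, Set.mem_singleton_iff] at hv₁C hv₂C
  push_neg at hv₁C hv₂C
  obtain ⟨e1, e2, e3, e4⟩ := hv₁C
  obtain ⟨g1, g2, g3, g4⟩ := hv₂C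
  -- basic neighbour facts
  have nbrs_u1 : ∀ {x : V}, G.Adj u₁ x → x = u₂ ∨ x = u₄ ∨ x = v₁ :=
    fun hx => cubic_mem G hcub h12 h41.symm hv₁ d24 e2.symm e4.symm hx
  have nbrs_u2 : ∀ {x : V}, G.Adj u₂ x → x = u₁ ∨ x = u₃ ∨ x = v₂ :=
    fun hx => cubic_mem G hcub h12.symm h23 hv₂ d13 g1.symm g3.symm hx
  -- v₁ is not adjacent to u₂, u₃, u₄
  have K2 : ¬ G.Adj u₂ v₁ := fun h =>
    contra5 G hcub hqc u₁ u₂ u₃ u₄ v₁ d12 d13 d14 d23 d24 d34 e1 e2 e3 e4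
      h12 h23 h34 h41 hv₁ (Or.inl rfl) h
  have K3 : ¬ G.Adj u₃ v₁ := fun h =>
    contra5 G hcub hqc u₁ u₂ u₃ u₄ v₁ d12 d13 d14 d23 d24 d34 e1 e2 e3 e4
      h12 h23 h34 h41 hv₁ (Or.inr (Or.inl rfl)) h
  have K4 : ¬ G.Adj u₄ v₁ := fun h =>
    contra5 G hcub hqc u₁ u₂ u₃ u₄ v₁ d12 d13 d14 d23 d24 d34 e1 e2 e3 e4
      h12 h23 h34 h41 hv₁ (Or.inr (Or.inr rfl)) h
  -- w₁ is a new vertex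
  have f2 : w₁ ≠ u₂ := fun h => K2 (h ▸ hw₁).symm
  have f3 : w₁ ≠ u₃ := fun h => K3 (h ▸ hw₁).symm
  have f4 : w₁ ≠ u₄ := fun h => K4 (h ▸ hw₁).symm
  have f5 : w₁ ≠ v₁ := fun h => G.irrefl (h ▸ hw₁)
  -- w₁ is not adjacent to u₂, u₃, u₄
  have L2 : ¬ G.Adj u₂ w₁ := fun h =>
    contra6 G hcub hqc u₁ u₂ u₃ u₄ v₁ w₁ d12 d13 d14 d23 d24 d34 e1 e2 e3 e4
      hw₁u f2 f3 f4 f5 h12 h23 h34 h41 hv₁ hw₁ (Or.inl rfl) h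
  have L3 : ¬ G.Adj u₃ w₁ := fun h =>
    contra6 G hcub hqc u₁ u₂ u₃ u₄ v₁ w₁ d12 d13 d14 d23 d24 d34 e1 e2 e3 e4
      hw₁u f2 f3 f4 f5 h12 h23 h34 h41 hv₁ hw₁ (Or.inr (Or.inl rfl)) h
  have L4 : ¬ G.Adj u₄ w₁ := fun h =>
    contra6 G hcub hqc u₁ u₂ u₃ u₄ v₁ w₁ d12 d13 d14 d23 d24 d34 e1 e2 e3 e4
      hw₁u f2 f3 f4 f5 h12 h23 h34 h41 hv₁ hw₁ (Or.inr (Or.inr rfl)) h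
  have L1 : ¬ G.Adj u₁ w₁ := by
    intro h
    rcases nbrs_u1 h with rfl | rfl | rfl
    · exact f2 rfl
    · exact f4 rfl
    · exact f5 rfl
  refine ⟨⟨⟨h23, hw₁, e2.symm, f2.symm, e3.symm, f3.symm⟩, fun h => K2 h, L2,
    fun h => K3 h, L3⟩, ?_⟩
  intro hz₁v₂
  have M1 : ¬ G.Adj u₁ z₁ := by
    intro h
    rcases nbrs_u1 h with rfl | rfl | rfl
    · exact L2 hz₁.symm
    · exact L4 hz₁.symm
    · exact hz₁v rfl
  have M2 : ¬ G.Adj u₂ z₁ := by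
    intro h
    rcases nbrs_u2 h with rfl | rfl | rfl
    · exact L1 hz₁.symm
    · exact L3 hz₁.symm
    · exact hz₁v₂ rfl
  refine ⟨⟨h12, hz₁, hw₁u.symm, ?_, f2.symm, ?_⟩, L1, M1, L2, M2⟩
  · intro h; subst h; exact L1 hz₁.symm
  · intro h; subst h; exact L2 hz₁.symm
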